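/- (TOD/RR protocol constants satisfy the UGES protocol bounds for the Euclidean-norm Lyapunov function) Let l ≥ 2 be an integer, let e ∈ ℝ^{n₁} × ... × ℝ^{n_l} be partitioned into l blocks, and define h(e) to be e with its block of largest Euclidean norm set to zero (choosing the smallest index in case of ties). Then with W(e) := ‖e‖ (Euclidean norm of the full vector), we have W(h(e)) ≤ √((l−1)/l) · W(e) for all e. -/

import Mathlib

theorem tod_protocol_contraction (l : ℕ) (hl : 2 ≤ l) (n : Fin l → ℕ)
    (e : ∀ j : Fin l, EuclideanSpace ℝ (Fin (n j)))
    (j₀ : Fin l) (hmax : ∀ j, ‖e j‖ ≤ ‖e j₀‖) :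
    Real.sqrt (∑ j, ‖Function.update e j₀ 0 j‖ ^ 2)
      ≤ Real.sqrt (((l : ℝ) - 1) / l) * Real.sqrt (∑ j, ‖e j‖ ^ 2) := by
  have hl0 : (0 : ℝ) < l := by positivity
  have hl2 : (2 : ℝ) ≤ l := by exact_mod_cast hl
  have hll : (0 : ℝ) ≤ ((l : ℝ) - 1) / l := div_nonneg (by linarith) hl0.le
  set S : ℝ := ∑ j, ‖e j‖ ^ 2 with hS
  have hM : S ≤ l * ‖e j₀‖ ^ 2 := by
    calc S ≤ ∑ _j : Fin l, ‖e j₀‖ ^ 2 := by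
            apply Finset.sum_le_sum
            intro j _
            exact pow_le_pow_left₀ (norm_nonneg _) (hmax j) 2
      _ = l * ‖e j₀‖ ^ 2 := by simp [mul_comm]
  have hsum : ∑ j, ‖Function.update e j₀ 0 j‖ ^ 2 = S - ‖e j₀‖ ^ 2 := by
    have h1 : ∀ j, ‖Function.update e j₀ 0 j‖ ^ 2
        = (Function.update (fun j => ‖e j‖ ^ 2) j₀ 0) j := by
      intro j
      by_cases h : j = j₀
      · subst h; simp
      · simp [Function.update_of_ne h]
    rw [Finset.sum_congr rfl (fun j _ => h1 j),
      Finset.sum_update_of_mem (Finset.mem_univ j₀), zero_add,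
      Finset.sdiff_singleton_eq_erase,
      Finset.sum_erase_eq_sub (Finset.mem_univ j₀)]
  rw [hsum, ← Real.sqrt_mul hll]
  apply Real.sqrt_le_sqrt
  have hdiv : S / l ≤ ‖e j₀‖ ^ 2 := by
    rw [div_le_iff₀ hl0]; linarith [hM]
  have heq : ((l : ℝ) - 1) / l * S = S - S / l := by
    field_simp
  rw [heq]
  linarith
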